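/- Let (b_n)_{n≥1} be a complex sequence with Σ_{n≥1} |b_n|² = 1 and b_1 ≠ 0, and define G : D → ℓ² by G(z) = (b_1 z, b_2 z², b_3 z³, ...). Then G is an injective map from the open unit disc D into the open unit ball B_∞ of ℓ², its inverse on G(D) is given by z ↦ z_1/b_1, and G(D) = {z ∈ B_∞ : b_n z_1^n = b_1^n z_n for all n ≥ 2}. -/

import Mathlib

open Metric

/-- For a unit-norm `ℓ²` sequence `(b_n)_{n≥1}` with `b_1 ≠ 0` (here `b (n+1)` plays the
role of `b_{n+1}`, so the relevant values are `b 1, b 2, …`), the map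
`G(z) = (b_1 z, b_2 z², b_3 z³, …)` is a well-defined injective map of the open unit disc
into the open unit ball of `ℓ²`, with inverse `x ↦ x_1/b_1` on its image, and its image is
the variety `{x ∈ B_∞ : b_n x_1ⁿ = b_1ⁿ x_n for all n ≥ 2}` (the `n`-th coordinate `x_n`
of `x ∈ ℓ²` being `x (n-1)` in `0`-based indexing). -/
theorem embedded_disc_variety (b : ℕ → ℂ)
    (hb : HasSum (fun n : ℕ => ‖b (n + 1)‖ ^ 2) 1) (hb1 : b 1 ≠ 0) :
    ∃ G : ℂ → lp (fun _ : ℕ => ℂ) 2,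
      (∀ z ∈ ball (0 : ℂ) 1, ∀ n : ℕ, (G z) n = b (n + 1) * z ^ (n + 1)) ∧
      (∀ z ∈ ball (0 : ℂ) 1, ‖G z‖ < 1) ∧
      Set.InjOn G (ball (0 : ℂ) 1) ∧
      (∀ z ∈ ball (0 : ℂ) 1, (G z) 0 / b 1 = z) ∧
      G '' ball (0 : ℂ) 1 =
        {x : lp (fun _ : ℕ => ℂ) 2 | ‖x‖ < 1 ∧
          ∀ n : ℕ, 2 ≤ n → b n * (x 0) ^ n = (b 1) ^ n * x (n - 1)} := by
  classical
  have htwo : ((2 : ENNReal)).toReal = (2 : ℝ) := by norm_num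
  have hrpow : ∀ x : ℝ, 0 ≤ x → x ^ ((2 : ENNReal)).toReal = x ^ (2 : ℕ) := by
    intro x hx
    rw [htwo]
    rw [show (2 : ℝ) = ((2 : ℕ) : ℝ) by norm_num, Real.rpow_natCast]
  set f : ℂ → ℕ → ℂ := fun z n => b (n + 1) * z ^ (n + 1) with hfdef
  have hnf : ∀ (z : ℂ) (n : ℕ), ‖f z n‖ ^ 2 = ‖b (n + 1)‖ ^ 2 * (‖z‖ ^ 2) ^ (n + 1) := by
    intro z n
    simp only [f, norm_mul, norm_pow, mul_pow]
    ring
  have hle : ∀ z : ℂ, ‖z‖ < 1 → ∀ n, ‖f z n‖ ^ 2 ≤ ‖b (n + 1)‖ ^ 2 * ‖z‖ ^ 2 := by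
    intro z hz n
    rw [hnf]
    have h2 : (‖z‖ ^ 2) ^ (n + 1) ≤ ‖z‖ ^ 2 :=
      calc (‖z‖ ^ 2) ^ (n + 1) ≤ (‖z‖ ^ 2) ^ 1 :=
            pow_le_pow_of_le_one (by positivity)
              (by nlinarith [norm_nonneg z]) (Nat.le_add_left 1 n)
        _ = ‖z‖ ^ 2 := pow_one _
    exact mul_le_mul_of_nonneg_left h2 (by positivity)
  have hSb : Summable (fun n : ℕ => ‖b (n + 1)‖ ^ 2) := hb.summable
  have hS : ∀ z : ℂ, ‖z‖ < 1 → Summable (fun n => ‖f z n‖ ^ 2) := by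
    intro z hz
    exact Summable.of_nonneg_of_le (fun n => by positivity) (hle z hz)
      (hSb.mul_right _)
  have hmem : ∀ z : ℂ, ‖z‖ < 1 → Memℓp (f z) 2 := by
    intro z hz
    apply memℓp_gen
    have : (fun n => ‖f z n‖ ^ ((2 : ENNReal)).toReal) = fun n => ‖f z n‖ ^ (2 : ℕ) := by
      funext n; exact hrpow _ (norm_nonneg _)
    rw [this]
    exact hS z hz
  set G : ℂ → lp (fun _ : ℕ => ℂ) 2 := fun z =>
    if h : ‖z‖ < 1 then ⟨f z, hmem z h⟩ else 0 with hGdef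
  have hGapp : ∀ z : ℂ, ‖z‖ < 1 → ∀ n : ℕ, (G z) n = b (n + 1) * z ^ (n + 1) := by
    intro z hz n
    simp only [G, dif_pos hz, f]
  have hballz : ∀ z : ℂ, z ∈ ball (0 : ℂ) 1 ↔ ‖z‖ < 1 := by
    intro z; rw [mem_ball_zero_iff]
  -- norm squared computation
  have hnormsq : ∀ z : ℂ, ‖z‖ < 1 → ‖G z‖ ^ 2 = ∑' n, ‖f z n‖ ^ 2 := by
    intro z hz
    have h0 : (0 : ℝ) < ((2 : ENNReal)).toReal := by norm_num
    have := lp.norm_rpow_eq_tsum h0 (G z)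
    rw [hrpow _ (norm_nonneg (G z))] at this
    rw [this]
    congr 1
    funext n
    rw [hrpow _ (norm_nonneg _)]
    congr 1
    rw [hGapp z hz n]
  have hnormlt : ∀ z : ℂ, ‖z‖ < 1 → ‖G z‖ < 1 := by
    intro z hz
    have h1 : ‖G z‖ ^ 2 ≤ ‖z‖ ^ 2 := by
      rw [hnormsq z hz]
      calc ∑' n, ‖f z n‖ ^ 2 ≤ ∑' n, ‖b (n + 1)‖ ^ 2 * ‖z‖ ^ 2 :=
            Summable.tsum_le_tsum (hle z hz) (hS z hz) (hSb.mul_right _)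
        _ = ‖z‖ ^ 2 := by rw [(hb.mul_right (‖z‖ ^ 2)).tsum_eq, one_mul]
    have h2 : ‖G z‖ ^ 2 < 1 := lt_of_le_of_lt h1 (by nlinarith [norm_nonneg z])
    nlinarith [norm_nonneg (G z)]
  have hinv : ∀ z : ℂ, ‖z‖ < 1 → (G z) 0 / b 1 = z := by
    intro z hz
    rw [hGapp z hz 0]
    field_simp
    ring
  refine ⟨G, ?_, ?_, ?_, ?_, ?_⟩
  · intro z hz n; exact hGapp z ((hballz z).mp hz) n
  · intro z hz; exact hnormlt z ((hballz z).mp hz)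
  · intro z hz w hw h
    have := hinv z ((hballz z).mp hz)
    rw [h, hinv w ((hballz w).mp hw)] at this
    exact this.symm
  · intro z hz; exact hinv z ((hballz z).mp hz)
  · ext x
    constructor
    · rintro ⟨z, hz, rfl⟩
      rw [hballz] at hz
      refine ⟨hnormlt z hz, ?_⟩
      intro n hn
      obtain ⟨m, rfl⟩ : ∃ m, n = m + 1 := ⟨n - 1, by omega⟩
      simp only [Nat.add_sub_cancel]
      rw [hGapp z hz 0, hGapp z hz m]
      ring
    · rintro ⟨hx, hrel⟩
      set z : ℂ := x 0 / b 1 with hzdef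
      have hx0 : x 0 = b 1 * z := by rw [hzdef]; field_simp
      have hcoord : ∀ n : ℕ, x n = f z n := by
        intro n
        cases n with
        | zero => simpa [f] using hx0
        | succ m =>
          have h := hrel (m + 2) (by omega)
          rw [show m + 2 - 1 = m + 1 from rfl] at h
          have hb1' : b 1 ^ (m + 2) ≠ 0 := pow_ne_zero _ hb1
          rw [hx0, mul_pow] at h
          have h' : b 1 ^ (m + 2) * (b (m + 2) * z ^ (m + 2)) =
              b 1 ^ (m + 2) * (x (m + 1)) := by linear_combination h
          have h'' := mul_left_cancel₀ hb1' h'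
          simp only [f]
          linear_combination h''.symm
      have hzlt : ‖z‖ < 1 := by
        by_contra hge
        push_neg at hge
        have hsum2 : Summable (fun n => ‖x n‖ ^ 2) := by
          have := (lp.memℓp x).summable (by norm_num : (0:ℝ) < ((2:ENNReal)).toReal)
          have heq : (fun n => ‖x n‖ ^ ((2 : ENNReal)).toReal) = fun n => ‖x n‖ ^ (2:ℕ) := by
            funext n; exact hrpow _ (norm_nonneg _)
          rwa [heq] at this
        have hge' : ∀ n, ‖b (n + 1)‖ ^ 2 ≤ ‖x n‖ ^ 2 := by
          intro n
          rw [hcoord n, hnf]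
          have : (1:ℝ) ≤ (‖z‖ ^ 2) ^ (n + 1) := one_le_pow₀ (by nlinarith)
          nlinarith [sq_nonneg (‖b (n+1)‖)]
        have h1 : (1:ℝ) ≤ ∑' n, ‖x n‖ ^ 2 := by
          rw [← hb.tsum_eq]
          exact Summable.tsum_le_tsum hge' hSb hsum2
        have hxsq : ‖x‖ ^ 2 = ∑' n, ‖x n‖ ^ 2 := by
          have h0 : (0 : ℝ) < ((2 : ENNReal)).toReal := by norm_num
          have := lp.norm_rpow_eq_tsum h0 x
          rw [hrpow _ (norm_nonneg x)] at this
          rw [this]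
          congr 1
          funext n
          exact hrpow _ (norm_nonneg _)
        rw [← hxsq] at h1
        nlinarith [norm_nonneg x]
      refine ⟨z, (hballz z).mpr hzlt, ?_⟩
      apply lp.ext
      funext n
      rw [hGapp z hzlt n, hcoord n]
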